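/- Let ξ ∈ S¹ satisfy: ξ·γ_i ≠ 0 for all i = 1, …, m, γ†(ξ) ≠ 0, and Σ_{i=1}^m c_i/(ξ·γ_i) ≠ 0. Then the vectors γ(ξ), γ†(ξ), γ^⊥(ξ) are linearly independent in ℝ³; equivalently, the 3×3 matrix Q(ξ) whose rows are γ(ξ), γ†(ξ), γ^⊥(ξ) has nonzero determinant. -/

import Mathlib

noncomputable section

open MeasureTheory

/-- Dot product in `ℝ²`. -/
def dot2 (a b : ℝ × ℝ) : ℝ := a.1 * b.1 + a.2 * b.2

/-- The rotation `w ↦ w^⊥ = (−w2, w1)`. -/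
def perp2 (w : ℝ × ℝ) : ℝ × ℝ := (-w.2, w.1)

/-- The symmetric tensor `w² = (w1², w1 w2, w2²)`, identified with a vector in `ℝ³`. -/
def tsq (w : ℝ × ℝ) : Fin 3 → ℝ := ![w.1 ^ 2, w.1 * w.2, w.2 ^ 2]

/-- The symmetric tensor `w ⊙ w^⊥ = (−w1 w2, (w1² − w2²)/2, w1 w2)`. -/
def todot (w : ℝ × ℝ) : Fin 3 → ℝ := ![-(w.1 * w.2), (w.1 ^ 2 - w.2 ^ 2) / 2, w.1 * w.2]

/-- The vector `γ(ξ) = −Σᵢ cᵢ γᵢ² / (ξ·γᵢ)`. -/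
def gammaVec (m : ℕ) (γ : Fin m → ℝ × ℝ) (c : Fin m → ℝ) (ξ : ℝ × ℝ) : Fin 3 → ℝ :=
  -∑ i : Fin m, (c i / dot2 ξ (γ i)) • tsq (γ i)

/-- The vector `γ†(ξ) = −Σᵢ cᵢ (γᵢ ⊙ γᵢ^⊥) / (ξ·γᵢ)`. -/
def gammaDag (m : ℕ) (γ : Fin m → ℝ × ℝ) (c : Fin m → ℝ) (ξ : ℝ × ℝ) : Fin 3 → ℝ :=
  -∑ i : Fin m, (c i / dot2 ξ (γ i)) • todot (γ i)

/-- The vector `γ^⊥(ξ) = −Σᵢ cᵢ (γᵢ^⊥)² / (ξ·γᵢ)`. -/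
def gammaPerp (m : ℕ) (γ : Fin m → ℝ × ℝ) (c : Fin m → ℝ) (ξ : ℝ × ℝ) : Fin 3 → ℝ :=
  -∑ i : Fin m, (c i / dot2 ξ (γ i)) • tsq (perp2 (γ i))

/-- away from the singular directions, the vectors `γ(ξ)`, `γ†(ξ)`,
`γ^⊥(ξ)` are linearly independent, i.e. the matrix `Q(ξ)` is invertible. -/
theorem Q_invertible
    (m : ℕ) (hm : 1 ≤ m) (γ : Fin m → ℝ × ℝ) (c : Fin m → ℝ)
    (hunit : ∀ i, (γ i).1 ^ 2 + (γ i).2 ^ 2 = 1)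
    (hdist : Function.Injective γ)
    (hc : ∀ i, c i ≠ 0)
    (ξ : ℝ × ℝ) (hξ : ξ.1 ^ 2 + ξ.2 ^ 2 = 1)
    (hξγ : ∀ i, dot2 ξ (γ i) ≠ 0)
    (hdag : gammaDag m γ c ξ ≠ 0)
    (hsum : ∑ i : Fin m, c i / dot2 ξ (γ i) ≠ 0) :
    LinearIndependent ℝ ![gammaVec m γ c ξ, gammaDag m γ c ξ, gammaPerp m γ c ξ] ∧
      (Matrix.of ![gammaVec m γ c ξ, gammaDag m γ c ξ, gammaPerp m γ c ξ]).det ≠ 0 := by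
  set a : Fin m → ℝ := fun i => c i / dot2 ξ (γ i) with ha
  set P : ℝ := ∑ i, a i * (γ i).1 ^ 2 with hP
  set Q : ℝ := ∑ i, a i * ((γ i).1 * (γ i).2) with hQ
  set R : ℝ := ∑ i, a i * (γ i).2 ^ 2 with hR
  have hA0 : gammaVec m γ c ξ 0 = -P := by
    simp [gammaVec, tsq, Finset.sum_apply, hP, ha]
  have hA1 : gammaVec m γ c ξ 1 = -Q := by
    simp [gammaVec, tsq, Finset.sum_apply, hQ, ha]
  have hA2 : gammaVec m γ c ξ 2 = -R := by
    simp [gammaVec, tsq, Finset.sum_apply, hR, ha]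
  have hB0 : gammaDag m γ c ξ 0 = Q := by
    simp [gammaDag, todot, Finset.sum_apply, hQ, ha, ← Finset.sum_neg_distrib]
  have hB1 : gammaDag m γ c ξ 1 = -((P - R) / 2) := by
    simp only [gammaDag, todot, Pi.neg_apply, Finset.sum_apply, Pi.smul_apply, smul_eq_mul,
      Matrix.cons_val_one, Matrix.cons_val_zero, Matrix.head_cons, hP, hR]
    rw [← Finset.sum_sub_distrib, Finset.sum_div]
    congr 1
    refine Finset.sum_congr rfl fun i _ => ?_
    simp only [ha]; ring
  have hB2 : gammaDag m γ c ξ 2 = -Q := by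
    simp [gammaDag, todot, Finset.sum_apply, hQ, ha]
  have hC0 : gammaPerp m γ c ξ 0 = -R := by
    simp [gammaPerp, tsq, perp2, Finset.sum_apply, hR, ha]
  have hC1 : gammaPerp m γ c ξ 1 = Q := by
    simp only [gammaPerp, tsq, perp2, Pi.neg_apply, Finset.sum_apply, Pi.smul_apply,
      smul_eq_mul, Matrix.cons_val_one, Matrix.cons_val_zero, Matrix.head_cons, hQ, ← Finset.sum_neg_distrib]
    exact Finset.sum_congr rfl fun i _ => by simp only [ha]; ring
  have hC2 : gammaPerp m γ c ξ 2 = -P := by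
    simp [gammaPerp, tsq, perp2, Finset.sum_apply, hP, ha]
  have hPRS : P + R ≠ 0 := by
    have : P + R = ∑ i, a i := by
      rw [hP, hR, ← Finset.sum_add_distrib]
      exact Finset.sum_congr rfl fun i _ => by rw [← mul_add, hunit i, mul_one]
    rw [this]; exact hsum
  have hQP : Q ≠ 0 ∨ P ≠ R := by
    by_contra h
    push_neg at h
    apply hdag
    funext j
    fin_cases j <;>
      simp [hB0, hB1, hB2, h.1, h.2]
  have hfac : 0 < (P - R) ^ 2 + 4 * Q ^ 2 := by
    rcases hQP with h | h
    · positivity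
    · have h' : P - R ≠ 0 := sub_ne_zero.mpr h
      positivity
  have hdet : (Matrix.of ![gammaVec m γ c ξ, gammaDag m γ c ξ, gammaPerp m γ c ξ]).det =
      -((P + R) * ((P - R) ^ 2 + 4 * Q ^ 2)) / 2 := by
    simp only [Matrix.det_fin_three, Matrix.of_apply, Matrix.cons_val', Matrix.cons_val_zero,
      Matrix.cons_val_one, Matrix.head_cons, Matrix.empty_val', Matrix.cons_val_fin_one,
      Matrix.cons_val_two, Matrix.tail_cons, Matrix.head_fin_const,
      hA0, hA1, hA2, hB0, hB1, hB2, hC0, hC1, hC2]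
    ring
  have hdet0 : (Matrix.of ![gammaVec m γ c ξ, gammaDag m γ c ξ, gammaPerp m γ c ξ]).det ≠ 0 := by
    rw [hdet]
    exact div_ne_zero (neg_ne_zero.mpr (mul_ne_zero hPRS hfac.ne')) two_ne_zero
  have hu : IsUnit (Matrix.of ![gammaVec m γ c ξ, gammaDag m γ c ξ, gammaPerp m γ c ξ]) :=
    (Matrix.isUnit_iff_isUnit_det _).2 (isUnit_iff_ne_zero.2 hdet0)
  exact ⟨Matrix.linearIndependent_rows_iff_isUnit.2 hu, hdet0⟩
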